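/- Let G be a graph each of whose components has at least 3 vertices. If G admits an improper twin k-edge coloring for some k ≥ 2, then G admits an improper twin t-edge coloring for every t ≥ k. -/
import Mathlib


open Finset

-- The vertex label induced by an edge coloring: `twinLabel G s v = Σ_{e ∈ E_v} s e` in `ZMod k`.
open scoped Classical in
noncomputable def twinLabel {V : Type*} [Fintype V] (G : SimpleGraph V) {k : ℕ}
    (s : Sym2 V → ZMod k) (v : V) : ZMod k :=
  ∑ e ∈ G.incidenceFinset v, s e

/-- `s` is an improper twin `k`-edge coloring of `G`: the induced vertex labeling
is a proper vertex coloring. -/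
def IsImproperTwin {V : Type*} [Fintype V] (G : SimpleGraph V) (k : ℕ)
    (s : Sym2 V → ZMod k) : Prop :=
  ∀ ⦃u v : V⦄, G.Adj u v → twinLabel G s u ≠ twinLabel G s v

/-- The improper twin chromatic index: the least `k ≥ 2` admitting an improper twin
`k`-edge coloring. -/
noncomputable def improperTwinIndex {V : Type*} [Fintype V] (G : SimpleGraph V) : ℕ :=
  sInf {k | 2 ≤ k ∧ ∃ s : Sym2 V → ZMod k, IsImproperTwin G k s}

/- ### Auxiliary development -/

open scoped Classical

section Aux

variable {V : Type*} [Fintype V]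

/-- `twinLabel` as an additive monoid hom in the edge coloring. -/
noncomputable def twinHom (G : SimpleGraph V) (t : ℕ) :
    (Sym2 V → ZMod t) →+ (V → ZMod t) where
  toFun s := twinLabel G s
  map_zero' := by funext v; simp [twinLabel]
  map_add' s₁ s₂ := by funext v; simp [twinLabel, Finset.sum_add_distrib]

lemma twinHom_apply (G : SimpleGraph V) {t : ℕ} (s : Sym2 V → ZMod t) :
    twinHom G t s = twinLabel G s := rfl

lemma single_edge_mem (G : SimpleGraph V) {t : ℕ} {u v : V} (h : G.Adj u v) (x : ZMod t) :
    (fun w => (if w = u then x else 0) + (if w = v then x else 0)) ∈ (twinHom G t).range := by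
  refine ⟨fun e => if e = s(u, v) then x else 0, ?_⟩
  funext w
  show (∑ e ∈ G.incidenceFinset w, if e = s(u, v) then x else 0) = _
  rw [Finset.sum_ite_eq' (G.incidenceFinset w) (s(u, v)) (fun _ => x)]
  by_cases hm : s(u, v) ∈ G.incidenceFinset w
  · rw [if_pos hm]
    rw [SimpleGraph.mem_incidenceFinset, SimpleGraph.mk'_mem_incidenceSet_iff] at hm
    rcases hm.2 with h1 | h1
    · subst h1
      rw [if_pos rfl, if_neg h.ne]
      ring
    · subst h1
      rw [if_pos rfl, if_neg h.ne']
      ring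
  · rw [if_neg hm]
    rw [SimpleGraph.mem_incidenceFinset, SimpleGraph.mk'_mem_incidenceSet_iff] at hm
    have h1 : w ≠ u := fun hh => hm ⟨h, Or.inl hh⟩
    have h2 : w ≠ v := fun hh => hm ⟨h, Or.inr hh⟩
    rw [if_neg h1, if_neg h2]
    ring

lemma walk_mem (G : SimpleGraph V) {t : ℕ} {u v : V} (W : G.Walk u v) :
    ∀ x : ZMod t,
      (fun w => (if w = u then x else 0) + (if w = v then (-1) ^ (W.length + 1) * x else 0))
        ∈ (twinHom G t).range := by
  induction W with
  | nil =>
    intro x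
    rename_i z
    have h0 : (fun w => (if w = z then x else 0)
        + (if w = z then (-1) ^ ((SimpleGraph.Walk.nil : G.Walk z z).length + 1) * x else 0))
        = (0 : V → ZMod t) := by
      funext w
      by_cases hw : w = z <;> simp [hw]
    rw [h0]
    exact zero_mem _
  | @cons a b c hab W ih =>
    intro x
    have hm1 := single_edge_mem G hab x
    have hm2 := ih (-x)
    have hm3 := add_mem hm1 hm2
    have heq : (fun w => (if w = a then x else 0)
        + (if w = c then (-1) ^ ((SimpleGraph.Walk.cons hab W).length + 1) * x else 0))
        = (fun w => (if w = a then x else 0) + (if w = b then x else 0))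
          + (fun w => (if w = b then -x else 0)
            + (if w = c then (-1) ^ (W.length + 1) * (-x) else 0)) := by
      funext w
      simp only [Pi.add_apply, SimpleGraph.Walk.length_cons]
      split_ifs <;> ring
    rw [heq]
    exact hm3

lemma plus_mem (G : SimpleGraph V) {t : ℕ} {u v : V}
    (h : ∃ W : G.Walk u v, Odd W.length) (x : ZMod t) :
    (fun w => (if w = u then x else 0) + (if w = v then x else 0)) ∈ (twinHom G t).range := by
  obtain ⟨W, hW⟩ := h
  have := walk_mem G W x
  simpa [Even.neg_one_pow hW.add_one, one_mul] using this

lemma minus_mem (G : SimpleGraph V) {t : ℕ} {u v : V}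
    (h : ∃ W : G.Walk u v, Even W.length) (x : ZMod t) :
    (fun w => (if w = u then x else 0) + (if w = v then -x else 0)) ∈ (twinHom G t).range := by
  obtain ⟨W, hW⟩ := h
  have := walk_mem G W x
  simpa [Odd.neg_one_pow hW.add_one, neg_one_mul] using this

lemma both_walks (G : SimpleGraph V) {u0 v : V} (W0 : G.Walk u0 u0) (hW0 : Odd W0.length)
    (hre : G.Reachable v u0) :
    (∃ W : G.Walk v u0, Odd W.length) ∧ (∃ W : G.Walk v u0, Even W.length) := by
  obtain ⟨W⟩ := hre
  rcases Nat.even_or_odd W.length with hE | hO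
  · refine ⟨⟨W.append W0, ?_⟩, ⟨W, hE⟩⟩
    rw [SimpleGraph.Walk.length_append]
    exact hE.add_odd hW0
  · refine ⟨⟨W, hO⟩, ⟨W.append W0, ?_⟩⟩
    rw [SimpleGraph.Walk.length_append]
    exact hO.add_odd hW0

/-- Abstract lemma: realize a function supported on `P` with controlled sum,
given the "plus" and "minus" generators relative to a base point `v0 ∈ P`. -/
lemma sum_rep_mem {t : ℕ} (R : AddSubgroup (V → ZMod t)) (P : Finset V) (v0 : V) (hv0 : v0 ∈ P)
    (hplus : ∀ x : ZMod t, (fun w => (if w = v0 then x else 0) + (if w = v0 then x else 0)) ∈ R)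
    (hminus : ∀ v ∈ P, ∀ x : ZMod t,
      (fun w => (if w = v then x else 0) + (if w = v0 then -x else 0)) ∈ R)
    (f : V → ZMod t) (hsupp : ∀ v, v ∉ P → f v = 0)
    (m : ZMod t) (hm : ∑ v ∈ P, f v = m + m) : f ∈ R := by
  have hsum : (∑ v ∈ P, fun w => (if w = v then f v else 0) + (if w = v0 then -(f v) else 0)) ∈ R :=
    AddSubgroup.sum_mem R (fun v hv => hminus v hv (f v))
  have h3 := add_mem hsum (hplus m)
  have heq : f = (∑ v ∈ P, fun w => (if w = v then f v else 0) + (if w = v0 then -(f v) else 0))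
      + (fun w => (if w = v0 then m else 0) + (if w = v0 then m else 0)) := by
    funext w
    simp only [Pi.add_apply, Finset.sum_apply, Finset.sum_add_distrib]
    rw [Finset.sum_ite_eq P w (fun v => f v)]
    by_cases hw : w = v0
    · subst hw
      simp only [eq_self_iff_true, if_true, if_pos hv0]
      rw [Finset.sum_neg_distrib, hm]
      ring
    · simp only [if_neg hw, Finset.sum_const_zero, add_zero]
      by_cases hwP : w ∈ P
      · simp [hwP]
      · simp [hwP, hsupp w hwP]
  rw [heq]
  exact h3

/-- Abstract lemma: produce a nowhere-zero-on-`P` function in `R`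
supported on `P`, when `|P| ≥ 2` and `t ≥ 3`, from the "minus" generators inside `P`. -/
lemma side_coloring {t : ℕ} (ht : 3 ≤ t) (R : AddSubgroup (V → ZMod t))
    (P : Finset V) (hP : 2 ≤ P.card)
    (hmem : ∀ u ∈ P, ∀ v ∈ P, ∀ x : ZMod t,
      (fun w => (if w = u then x else 0) + (if w = v then -x else 0)) ∈ R) :
    ∃ c : V → ZMod t, (∀ v ∈ P, c v ≠ 0) ∧ (∀ v ∉ P, c v = 0) ∧ c ∈ R := by
  haveI : NeZero t := ⟨by omega⟩
  haveI : Fact (1 < t) := ⟨by omega⟩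
  obtain ⟨x0, hx0, x1, hx1, hx01⟩ := Finset.one_lt_card.mp (by omega : 1 < P.card)
  set sT : ZMod t := -(((P.card - 2 : ℕ) : ZMod t)) with hsT
  have hex : ∃ a : ZMod t, a ≠ 0 ∧ a ≠ sT := by
    by_contra hcon
    push_neg at hcon
    have hsub : (Finset.univ : Finset (ZMod t)) ⊆ {0, sT} := by
      intro a _
      rcases eq_or_ne a 0 with rfl | ha
      · simp
      · simp [hcon a ha]
    have h1 := Finset.card_le_card hsub
    rw [Finset.card_univ, ZMod.card] at h1
    have h2 : ({0, sT} : Finset (ZMod t)).card ≤ 2 :=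
      (Finset.card_insert_le _ _).trans (by simp)
    omega
  obtain ⟨a, ha0, haT⟩ := hex
  set b : ZMod t := sT - a with hb
  have hb0 : b ≠ 0 := sub_ne_zero.mpr haT.symm
  set c : V → ZMod t := fun v => if v = x0 then a else if v = x1 then b else
      if v ∈ P then 1 else 0 with hc
  have hcP : ∀ v ∈ P, c v ≠ 0 := by
    intro v hv
    rw [hc]
    by_cases h0 : v = x0
    · simpa [h0] using ha0
    · by_cases h1 : v = x1
      · simpa [h0, h1, Ne.symm hx01] using hb0
      · simp [h0, h1, hv]
  have hcnP : ∀ v ∉ P, c v = 0 := by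
    intro v hv
    have h0 : v ≠ x0 := fun hc' => hv (hc' ▸ hx0)
    have h1 : v ≠ x1 := fun hc' => hv (hc' ▸ hx1)
    simp [hc, h0, h1, hv]
  have hsum : ∑ v ∈ P, c v = 0 := by
    rw [← Finset.add_sum_erase P c hx0]
    have hx1' : x1 ∈ P.erase x0 := Finset.mem_erase.mpr ⟨fun hc' => hx01 hc'.symm, hx1⟩
    rw [← Finset.add_sum_erase _ c hx1']
    have hones : ∀ v ∈ (P.erase x0).erase x1, c v = 1 := by
      intro v hv
      obtain ⟨hv1, hv0, hvP⟩ : v ≠ x1 ∧ v ≠ x0 ∧ v ∈ P := by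
        have h1 := Finset.mem_erase.mp hv
        have h2 := Finset.mem_erase.mp h1.2
        exact ⟨h1.1, h2.1, h2.2⟩
      simp [hc, hv0, hv1, hvP]
    rw [Finset.sum_congr rfl hones]
    have hcard : ((P.erase x0).erase x1).card = P.card - 2 := by
      rw [Finset.card_erase_of_mem hx1', Finset.card_erase_of_mem hx0]
      omega
    have hcx0 : c x0 = a := by simp [hc]
    have hcx1 : c x1 = b := by simp [hc, Ne.symm hx01]
    rw [Finset.sum_const, hcard, hcx0, hcx1, nsmul_eq_mul, mul_one, hb, hsT]
    ring
  refine ⟨c, hcP, hcnP, ?_⟩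
  have hmem' : (∑ v ∈ P, fun w => (if w = v then c v else 0) + (if w = x0 then -(c v) else 0)) ∈ R :=
    AddSubgroup.sum_mem R (fun v hv => hmem v hv x0 hx0 (c v))
  have heq : c = ∑ v ∈ P, fun w => (if w = v then c v else 0) + (if w = x0 then -(c v) else 0) := by
    funext w
    simp only [Finset.sum_apply, Finset.sum_add_distrib]
    rw [Finset.sum_ite_eq P w (fun v => c v)]
    by_cases hw : w = x0
    · subst hw
      simp only [eq_self_iff_true, if_true, if_pos hx0]
      rw [Finset.sum_neg_distrib, hsum]
      ring
    · simp only [if_neg hw, Finset.sum_const_zero, add_zero]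
      by_cases hwP : w ∈ P
      · simp [hwP]
      · simp [hwP, hcnP w hwP]
  rw [heq]
  exact hmem'

end Aux

theorem stmt_8 {V : Type*} [Fintype V] (G : SimpleGraph V)
    (hnice : ∀ v : V, 3 ≤ (G.connectedComponentMk v).supp.ncard)
    (k : ℕ) (hk : 2 ≤ k)
    (h : ∃ s : Sym2 V → ZMod k, IsImproperTwin G k s) :
    ∀ t : ℕ, k ≤ t → ∃ s : Sym2 V → ZMod t, IsImproperTwin G t s := by
  intro t hkt
  rcases eq_or_lt_of_le hkt with rfl | hlt
  · exact h
  obtain ⟨s0, hs0⟩ := h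
  have ht3 : 3 ≤ t := by omega
  haveI : NeZero t := ⟨by omega⟩
  haveI : NeZero k := ⟨by omega⟩
  set ℓ : V → ZMod k := twinLabel G s0 with hldef
  set c0 : V → ZMod t := fun v => (((ℓ v).val : ℕ) : ZMod t) with hc0def
  have hvl : ∀ v : V, (ℓ v).val < t := fun v => lt_of_lt_of_le (ZMod.val_lt _) (le_of_lt hlt)
  have hvalc0 : ∀ v : V, (c0 v).val = (ℓ v).val := by
    intro v
    rw [hc0def]
    exact ZMod.val_cast_of_lt (hvl v)
  have hc0p : ∀ {u v : V}, G.Adj u v → c0 u ≠ c0 v := by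
    intro u v huv heq
    refine hs0 huv ?_
    have h3 : (ℓ u).val = (ℓ v).val := by
      rw [← hvalc0 u, ← hvalc0 v, heq]
    exact Function.LeftInverse.injective (ZMod.natCast_rightInverse (n := k)) h3
  have key : ∀ K : G.ConnectedComponent, ∃ cK : V → ZMod t,
      (∀ u v : V, G.connectedComponentMk u = K → G.Adj u v → cK u ≠ cK v) ∧
      (fun v => if G.connectedComponentMk v = K then cK v else 0) ∈ (twinHom G t).range := by
    intro K
    induction K using SimpleGraph.ConnectedComponent.ind with
    | _ r =>
    set SK : Finset V := Finset.univ.filter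
        (fun v => G.connectedComponentMk v = G.connectedComponentMk r) with hSKdef
    have hmemSK : ∀ v : V, v ∈ SK ↔ G.connectedComponentMk v = G.connectedComponentMk r := by
      intro v; simp [hSKdef]
    have hsupp0 : ∀ (g : V → ZMod t) (v : V), v ∉ SK →
        (if G.connectedComponentMk v = G.connectedComponentMk r then g v else 0) = 0 :=
      fun g v hv => if_neg (fun hh => hv ((hmemSK v).mpr hh))
    by_cases hodd : ∃ u, G.connectedComponentMk u = G.connectedComponentMk r
        ∧ ∃ W : G.Walk u u, Odd W.length
    · -- odd component
      obtain ⟨u0, hu0, W0, hW0⟩ := hodd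
      have hu0SK : u0 ∈ SK := (hmemSK u0).mpr hu0
      have hboth : ∀ v ∈ SK,
          (∃ W : G.Walk v u0, Odd W.length) ∧ (∃ W : G.Walk v u0, Even W.length) := by
        intro v hv
        refine both_walks G W0 hW0 ?_
        exact SimpleGraph.ConnectedComponent.eq.mp (((hmemSK v).mp hv).trans hu0.symm)
      have hplus : ∀ x : ZMod t,
          (fun w => (if w = u0 then x else 0) + (if w = u0 then x else 0))
            ∈ (twinHom G t).range :=
        fun x => plus_mem G ⟨W0, hW0⟩ x
      have hminus : ∀ v ∈ SK, ∀ x : ZMod t,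
          (fun w => (if w = v then x else 0) + (if w = u0 then -x else 0))
            ∈ (twinHom G t).range :=
        fun v hv x => minus_mem G (hboth v hv).2 x
      have hifsum : ∀ (g : V → ZMod t),
          (∑ v ∈ SK, if G.connectedComponentMk v = G.connectedComponentMk r then g v else 0)
            = ∑ v ∈ SK, g v :=
        fun g => Finset.sum_congr rfl (fun v hv => if_pos ((hmemSK v).mp hv))
      rcases Nat.even_or_odd t with htE | htO
      · -- t even : need an even sum of values
        set N : ℕ := ∑ v ∈ SK, (ℓ v).val with hNdef
        have hc0sum : ∑ v ∈ SK, c0 v = ((N : ℕ) : ZMod t) := by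
          rw [hNdef, Nat.cast_sum]
        by_cases hNe : Even N
        · refine ⟨c0, fun u v _ huv => hc0p huv, ?_⟩
          obtain ⟨j, hj⟩ := hNe
          refine sum_rep_mem _ SK u0 hu0SK hplus hminus _ (hsupp0 c0)
            ((j : ℕ) : ZMod t) ?_
          rw [hifsum c0, hc0sum, hj, Nat.cast_add]
        · by_cases hex : ∃ w ∈ SK, Even ((ℓ w).val)
          · -- recolor an even-valued vertex to t-1
            obtain ⟨w0, hw0SK, hw0E⟩ := hex
            set cK : V → ZMod t := Function.update c0 w0 (((t-1 : ℕ) : ZMod t)) with hcKdef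
            have hcKeq : ∀ v : V, v ≠ w0 → cK v = c0 v := by
              intro v hv
              rw [hcKdef, Function.update_of_ne hv]
            have hcKw0 : cK w0 = ((t-1 : ℕ) : ZMod t) := by
              rw [hcKdef, Function.update_self]
            refine ⟨cK, ?_, ?_⟩
            · intro u v hu huv heq
              by_cases hu0' : u = w0
              · by_cases hv0' : v = w0
                · exact G.ne_of_adj huv (hu0'.trans hv0'.symm)
                · rw [hu0', hcKw0, hcKeq v hv0'] at heq
                  have e1 : ((t-1 : ℕ) : ZMod t).val = t - 1 := ZMod.val_cast_of_lt (by omega)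
                  have e2 := hvalc0 v
                  rw [← heq] at e2
                  have e3 : (ℓ v).val < k := ZMod.val_lt _
                  omega
              · by_cases hv0' : v = w0
                · rw [hv0', hcKw0, hcKeq u hu0'] at heq
                  have e1 : ((t-1 : ℕ) : ZMod t).val = t - 1 := ZMod.val_cast_of_lt (by omega)
                  have e2 := hvalc0 u
                  rw [heq] at e2
                  have e3 : (ℓ u).val < k := ZMod.val_lt _
                  omega
                · rw [hcKeq u hu0', hcKeq v hv0'] at heq
                  exact hc0p huv heq
            · have hsum1 : ∑ v ∈ SK, cK v
                  = ((t-1 : ℕ) : ZMod t) + ∑ v ∈ SK \ {w0}, c0 v := by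
                rw [hcKdef]
                exact Finset.sum_update_of_mem hw0SK c0 _
              set N' : ℕ := ∑ v ∈ SK \ {w0}, (ℓ v).val with hN'def
              have hsum2 : ∑ v ∈ SK \ {w0}, c0 v = ((N' : ℕ) : ZMod t) := by
                rw [hN'def, Nat.cast_sum]
              have hNN : N = (ℓ w0).val + N' := by
                rw [hNdef, hN'def, ← Finset.add_sum_erase _ _ hw0SK, Finset.erase_eq]
              have hpar : Even ((t-1) + N') := by
                have h1 : N % 2 = 1 := Nat.odd_iff.mp (Nat.not_even_iff_odd.mp hNe)
                have h2 : (ℓ w0).val % 2 = 0 := Nat.even_iff.mp hw0E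
                have h3 : t % 2 = 0 := Nat.even_iff.mp htE
                rw [Nat.even_iff]
                omega
              obtain ⟨j, hj⟩ := hpar
              refine sum_rep_mem _ SK u0 hu0SK hplus hminus _ (hsupp0 cK)
                ((j : ℕ) : ZMod t) ?_
              rw [hifsum cK, hsum1, hsum2, ← Nat.cast_add, hj, Nat.cast_add]
          · -- all values odd : recolor u0 to 0
            have hallodd : ∀ w ∈ SK, Odd ((ℓ w).val) := by
              intro w hw
              rcases Nat.even_or_odd ((ℓ w).val) with hE | hO
              · exact absurd ⟨w, hw, hE⟩ hex
              · exact hO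
            set cK : V → ZMod t := Function.update c0 u0 0 with hcKdef
            have hcKeq : ∀ v : V, v ≠ u0 → cK v = c0 v := by
              intro v hv
              rw [hcKdef, Function.update_of_ne hv]
            have hcKu0 : cK u0 = 0 := by
              rw [hcKdef, Function.update_self]
            have hzero : ∀ v : V, v ∈ SK → v ≠ u0 → cK v ≠ 0 := by
              intro v hvSK hvne hveq
              rw [hcKeq v hvne] at hveq
              have e2 := hvalc0 v
              rw [hveq, ZMod.val_zero] at e2
              have := hallodd v hvSK
              rw [← e2] at this
              exact (Nat.odd_iff.mp this).symm.trans_ne (by norm_num) rfl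
            refine ⟨cK, ?_, ?_⟩
            · intro u v hu huv heq
              have hvK : G.connectedComponentMk v = G.connectedComponentMk r :=
                (SimpleGraph.ConnectedComponent.eq.mpr huv.reachable).symm.trans hu
              have huSK : u ∈ SK := (hmemSK u).mpr hu
              have hvSK : v ∈ SK := (hmemSK v).mpr hvK
              by_cases hu0' : u = u0
              · by_cases hv0' : v = u0
                · exact G.ne_of_adj huv (hu0'.trans hv0'.symm)
                · refine hzero v hvSK hv0' ?_
                  rw [← heq, hu0', hcKu0]
              · by_cases hv0' : v = u0
                · refine hzero u huSK hu0' ?_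
                  rw [heq, hv0', hcKu0]
                · rw [hcKeq u hu0', hcKeq v hv0'] at heq
                  exact hc0p huv heq
            · have hsum1 : ∑ v ∈ SK, cK v = 0 + ∑ v ∈ SK \ {u0}, c0 v := by
                rw [hcKdef]
                exact Finset.sum_update_of_mem hu0SK c0 _
              set N' : ℕ := ∑ v ∈ SK \ {u0}, (ℓ v).val with hN'def
              have hsum2 : ∑ v ∈ SK \ {u0}, c0 v = ((N' : ℕ) : ZMod t) := by
                rw [hN'def, Nat.cast_sum]
              have hNN : N = (ℓ u0).val + N' := by
                rw [hNdef, hN'def, ← Finset.add_sum_erase _ _ hu0SK, Finset.erase_eq]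
              have hpar : Even N' := by
                have h1 : N % 2 = 1 := Nat.odd_iff.mp (Nat.not_even_iff_odd.mp hNe)
                have h2 : (ℓ u0).val % 2 = 1 := Nat.odd_iff.mp (hallodd u0 hu0SK)
                rw [Nat.even_iff]
                omega
              obtain ⟨j, hj⟩ := hpar
              refine sum_rep_mem _ SK u0 hu0SK hplus hminus _ (hsupp0 cK)
                ((j : ℕ) : ZMod t) ?_
              rw [hifsum cK, hsum1, hsum2, hj, Nat.cast_add, zero_add]
      · -- t odd : any sum works
        refine ⟨c0, fun u v _ huv => hc0p huv, ?_⟩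
        set S : ZMod t := ∑ v ∈ SK, c0 v with hSdef
        have h2 : (((t+1)/2 : ℕ) : ZMod t) + (((t+1)/2 : ℕ) : ZMod t) = 1 := by
          rw [← Nat.cast_add]
          have h21 : (t+1)/2 + (t+1)/2 = t + 1 := by
            obtain ⟨j, hj⟩ := htO
            omega
          rw [h21, Nat.cast_add, Nat.cast_one, ZMod.natCast_self, zero_add]
        refine sum_rep_mem _ SK u0 hu0SK hplus hminus _ (hsupp0 c0)
          ((((t+1)/2 : ℕ) : ZMod t) * S) ?_
        rw [hifsum c0, ← hSdef]
        calc S = 1 * S := (one_mul S).symm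
        _ = ((((t+1)/2 : ℕ) : ZMod t) + (((t+1)/2 : ℕ) : ZMod t)) * S := by rw [h2]
        _ = (((t+1)/2 : ℕ) : ZMod t) * S + (((t+1)/2 : ℕ) : ZMod t) * S := by ring
    · -- even (bipartite-like) component
      push_neg at hodd
      have hnb : ∀ u v : V, G.connectedComponentMk u = G.connectedComponentMk r →
          (∃ W : G.Walk u v, Even W.length) → (∃ W : G.Walk u v, Odd W.length) → False := by
        intro u v hu hE hO
        obtain ⟨W1, hW1⟩ := hE
        obtain ⟨W2, hW2⟩ := hO
        refine hodd u hu (W1.append W2.reverse) ?_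
        rw [SimpleGraph.Walk.length_append, SimpleGraph.Walk.length_reverse]
        exact hW1.add_odd hW2
      set X : Finset V := SK.filter (fun v => ∃ W : G.Walk r v, Even W.length) with hXdef
      set Y : Finset V := SK.filter (fun v => ¬ ∃ W : G.Walk r v, Even W.length) with hYdef
      have hXsub : X ⊆ SK := Finset.filter_subset _ _
      have hYsub : Y ⊆ SK := Finset.filter_subset _ _
      have hXeven : ∀ v ∈ X, ∃ W : G.Walk r v, Even W.length := by
        intro v hv
        rw [hXdef] at hv
        exact (Finset.mem_filter.mp hv).2
      have hYodd : ∀ v ∈ Y, ∃ W : G.Walk r v, Odd W.length := by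
        intro v hv
        rw [hYdef] at hv
        obtain ⟨hvSK, hvne⟩ := Finset.mem_filter.mp hv
        have hre : G.Reachable r v :=
          SimpleGraph.ConnectedComponent.eq.mp ((hmemSK v).mp hvSK).symm
        obtain ⟨W⟩ := hre
        rcases Nat.even_or_odd W.length with hE | hO
        · exact absurd ⟨W, hE⟩ hvne
        · exact ⟨W, hO⟩
      have hXY : ∀ v, v ∈ X → v ∈ Y → False := by
        intro v hvX hvY
        rw [hXdef] at hvX
        rw [hYdef] at hvY
        exact (Finset.mem_filter.mp hvY).2 (Finset.mem_filter.mp hvX).2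
      have hside : ∀ v ∈ SK, v ∈ X ∨ v ∈ Y := by
        intro v hv
        by_cases hE : ∃ W : G.Walk r v, Even W.length
        · exact Or.inl (by rw [hXdef]; exact Finset.mem_filter.mpr ⟨hv, hE⟩)
        · exact Or.inr (by rw [hYdef]; exact Finset.mem_filter.mpr ⟨hv, hE⟩)
      have hcards : X.card + Y.card = SK.card := by
        rw [hXdef, hYdef]
        exact Finset.card_filter_add_card_filter_not _
      have hSK3 : 3 ≤ SK.card := by
        have h1 := hnice r
        have h2 : (G.connectedComponentMk r).supp.toFinset = SK := by
          ext v
          simp only [Set.mem_toFinset, SimpleGraph.ConnectedComponent.mem_supp_iff]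
          exact ((hmemSK v).symm)
        rw [Set.ncard_eq_toFinset_card', h2] at h1
        exact h1
      have hXX : ∀ u ∈ X, ∀ v ∈ X, ∃ W : G.Walk u v, Even W.length := by
        intro u hu v hv
        obtain ⟨W1, h1⟩ := hXeven u hu
        obtain ⟨W2, h2'⟩ := hXeven v hv
        refine ⟨W1.reverse.append W2, ?_⟩
        rw [SimpleGraph.Walk.length_append, SimpleGraph.Walk.length_reverse]
        exact h1.add h2'
      have hYY : ∀ u ∈ Y, ∀ v ∈ Y, ∃ W : G.Walk u v, Even W.length := by
        intro u hu v hv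
        obtain ⟨W1, h1⟩ := hYodd u hu
        obtain ⟨W2, h2'⟩ := hYodd v hv
        refine ⟨W1.reverse.append W2, ?_⟩
        rw [SimpleGraph.Walk.length_append, SimpleGraph.Walk.length_reverse]
        exact h1.add_odd h2'
      have hadjodd : ∀ u v : V, G.Adj u v → ∃ W : G.Walk u v, Odd W.length := by
        intro u v huv
        exact ⟨SimpleGraph.Walk.cons huv SimpleGraph.Walk.nil, by simp⟩
      have hnoXX : ∀ u ∈ X, ∀ v ∈ X, ¬ G.Adj u v := by
        intro u hu v hv huv
        exact hnb u v ((hmemSK u).mp (hXsub hu)) (hXX u hu v hv) (hadjodd u v huv)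
      have hnoYY : ∀ u ∈ Y, ∀ v ∈ Y, ¬ G.Adj u v := by
        intro u hu v hv huv
        exact hnb u v ((hmemSK u).mp (hYsub hu)) (hYY u hu v hv) (hadjodd u v huv)
      rcases le_or_gt 2 X.card with hbig | hsmall
      · obtain ⟨c, hc1, hc2, hc3⟩ := side_coloring ht3 (twinHom G t).range X hbig
          (fun u hu v hv x => minus_mem G (hXX u hu v hv) x)
        refine ⟨c, ?_, ?_⟩
        · intro u v hu huv heq
          have hvK : G.connectedComponentMk v = G.connectedComponentMk r :=
            (SimpleGraph.ConnectedComponent.eq.mpr huv.reachable).symm.trans hu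
          have huSK : u ∈ SK := (hmemSK u).mpr hu
          have hvSK : v ∈ SK := (hmemSK v).mpr hvK
          rcases hside u huSK with huX | huY
          · rcases hside v hvSK with hvX | hvY
            · exact hnoXX u huX v hvX huv
            · exact hc1 u huX (heq.trans (hc2 v (fun hvX => hXY v hvX hvY)))
          · rcases hside v hvSK with hvX | hvY
            · exact hc1 v hvX (heq.symm.trans (hc2 u (fun huX => hXY u huX huY)))
            · exact hnoYY u huY v hvY huv
        · have heq : (fun v => if G.connectedComponentMk v = G.connectedComponentMk r
              then c v else 0) = c := by
            funext v
            by_cases hv : G.connectedComponentMk v = G.connectedComponentMk r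
            · rw [if_pos hv]
            · rw [if_neg hv]
              exact (hc2 v (fun hvX => hv ((hmemSK v).mp (hXsub hvX)))).symm
          rw [heq]
          exact hc3
      · have hY2 : 2 ≤ Y.card := by omega
        obtain ⟨c, hc1, hc2, hc3⟩ := side_coloring ht3 (twinHom G t).range Y hY2
          (fun u hu v hv x => minus_mem G (hYY u hu v hv) x)
        refine ⟨c, ?_, ?_⟩
        · intro u v hu huv heq
          have hvK : G.connectedComponentMk v = G.connectedComponentMk r :=
            (SimpleGraph.ConnectedComponent.eq.mpr huv.reachable).symm.trans hu
          have huSK : u ∈ SK := (hmemSK u).mpr hu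
          have hvSK : v ∈ SK := (hmemSK v).mpr hvK
          rcases hside u huSK with huX | huY
          · rcases hside v hvSK with hvX | hvY
            · exact hnoXX u huX v hvX huv
            · exact hc1 v hvY (heq.symm.trans (hc2 u (fun huY => hXY u huX huY)))
          · rcases hside v hvSK with hvX | hvY
            · exact hc1 u huY (heq.trans (hc2 v (fun hvY => hXY v hvX hvY)))
            · exact hnoYY u huY v hvY huv
        · have heq : (fun v => if G.connectedComponentMk v = G.connectedComponentMk r
              then c v else 0) = c := by
            funext v
            by_cases hv : G.connectedComponentMk v = G.connectedComponentMk r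
            · rw [if_pos hv]
            · rw [if_neg hv]
              exact (hc2 v (fun hvY => hv ((hmemSK v).mp (hYsub hvY)))).symm
          rw [heq]
          exact hc3
  choose cFor hprop hmem using key
  haveI : Fintype G.ConnectedComponent := Fintype.ofFinite _
  have hsum : (∑ K : G.ConnectedComponent,
      fun v => if G.connectedComponentMk v = K then cFor K v else 0)
        ∈ (twinHom G t).range :=
    AddSubgroup.sum_mem _ (fun K _ => hmem K)
  obtain ⟨s', hs'⟩ := AddMonoidHom.mem_range.mp hsum
  refine ⟨s', ?_⟩
  have heval : ∀ w : V, twinLabel G s' w = cFor (G.connectedComponentMk w) w := by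
    intro w
    have h1 : twinLabel G s' = (∑ K : G.ConnectedComponent,
        fun v => if G.connectedComponentMk v = K then cFor K v else 0) := hs'
    rw [h1]
    rw [Finset.sum_apply]
    rw [Finset.sum_ite_eq Finset.univ (G.connectedComponentMk w) (fun K => cFor K w)]
    rw [if_pos (Finset.mem_univ _)]
  intro u v huv
  have hcomp : G.connectedComponentMk u = G.connectedComponentMk v :=
    SimpleGraph.ConnectedComponent.eq.mpr huv.reachable
  rw [heval u, heval v, ← hcomp]
  exact hprop (G.connectedComponentMk u) u v rfl huv
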